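/- Let d ≥ 1 and m ≥ 1 be integers, let C : [0,1]^d → ℝ satisfy |C(u) − C(v)| ≤ Σ_{ℓ=1}^{d} |u_ℓ − v_ℓ| for all u, v ∈ [0,1]^d, and let f : [0,1]^d → ℝ be bounded. Then sup_{u ∈ [0,1]^d} |B_m f(u) − C(u)| ≤ sup_{v ∈ [0,1]^d} |f(v) − C(v)| + d/(2√m). -/

import Mathlib

/-- The Bernstein basis polynomial `P_{k,m}(u) = C(m,k) u^k (1-u)^(m-k)`. -/
noncomputable def bernsteinBasis (m k : ℕ) (u : ℝ) : ℝ :=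
  (m.choose k : ℝ) * u ^ k * (1 - u) ^ (m - k)

/-- The multivariate Bernstein polynomial of order `m` of `f : [0,1]^d → ℝ`. -/
noncomputable def bernsteinB (d m : ℕ) (f : (Fin d → ℝ) → ℝ) (u : Fin d → ℝ) : ℝ :=
  ∑ k : Fin d → Fin (m + 1),
    f (fun ℓ => ((k ℓ : ℕ) : ℝ) / m) * ∏ ℓ, bernsteinBasis m (k ℓ) (u ℓ)

lemma bernsteinBasis_eq (m : ℕ) (k : Fin (m + 1)) (x : unitInterval) :
    bernsteinBasis m k (x : ℝ) = bernstein m k x := by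
  rw [bernstein_apply, bernsteinBasis]

lemma bernsteinBasis_nonneg (m k : ℕ) {u : ℝ} (hu : u ∈ Set.Icc (0 : ℝ) 1) :
    0 ≤ bernsteinBasis m k u := by
  have h1 : (0:ℝ) ≤ u := hu.1
  have h2 : (0:ℝ) ≤ 1 - u := by linarith [hu.2]
  exact mul_nonneg (mul_nonneg (by positivity) (by positivity)) (by positivity)

lemma sum_bernsteinBasis (m : ℕ) {u : ℝ} (hu : u ∈ Set.Icc (0 : ℝ) 1) :
    ∑ i : Fin (m + 1), bernsteinBasis m i u = 1 := by
  have := bernstein.probability m ⟨u, hu⟩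
  rw [← this]
  exact Finset.sum_congr rfl fun i _ => bernsteinBasis_eq m i ⟨u, hu⟩

lemma variance_bernsteinBasis (m : ℕ) (hm : 1 ≤ m) {u : ℝ} (hu : u ∈ Set.Icc (0 : ℝ) 1) :
    ∑ i : Fin (m + 1), (u - ((i : ℕ) : ℝ) / m) ^ 2 * bernsteinBasis m i u
      = u * (1 - u) / m := by
  have hmpos : (0:ℝ) < m := by exact_mod_cast hm
  have := bernstein.variance (n := m) (by omega) ⟨u, hu⟩
  rw [← this]
  exact Finset.sum_congr rfl fun i _ => by rw [bernsteinBasis_eq m i ⟨u, hu⟩]; rfl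

lemma key1d (m : ℕ) (hm : 1 ≤ m) {u : ℝ} (hu : u ∈ Set.Icc (0 : ℝ) 1) :
    ∑ i : Fin (m + 1), |((i : ℕ) : ℝ) / m - u| * bernsteinBasis m i u
      ≤ 1 / (2 * Real.sqrt m) := by
  have hmpos : (0:ℝ) < m := by exact_mod_cast hm
  set b : Fin (m + 1) → ℝ := fun i => bernsteinBasis m i u with hb
  have hbn : ∀ i, 0 ≤ b i := fun i => bernsteinBasis_nonneg m i hu
  have key : ∑ i : Fin (m + 1), |((i : ℕ) : ℝ) / m - u| * b i
      ≤ Real.sqrt (∑ i : Fin (m+1), b i) *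
        Real.sqrt (∑ i : Fin (m+1), (u - ((i : ℕ) : ℝ)/m)^2 * b i) := by
    have h := Real.sum_mul_le_sqrt_mul_sqrt (Finset.univ : Finset (Fin (m+1)))
      (fun i => Real.sqrt (b i)) (fun i => |((i : ℕ) : ℝ)/m - u| * Real.sqrt (b i))
    calc ∑ i : Fin (m + 1), |((i : ℕ) : ℝ) / m - u| * b i
        = ∑ i : Fin (m+1), Real.sqrt (b i) * (|((i : ℕ) : ℝ)/m - u| * Real.sqrt (b i)) := by
          refine Finset.sum_congr rfl fun i _ => ?_
          rw [show Real.sqrt (b i) * (|((i : ℕ) : ℝ)/m - u| * Real.sqrt (b i))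
              = |((i : ℕ) : ℝ)/m - u| * (Real.sqrt (b i) * Real.sqrt (b i)) by ring,
            Real.mul_self_sqrt (hbn i)]
      _ ≤ Real.sqrt (∑ i : Fin (m+1), Real.sqrt (b i) ^ 2) *
          Real.sqrt (∑ i : Fin (m+1), (|((i : ℕ) : ℝ)/m - u| * Real.sqrt (b i)) ^ 2) := h
      _ = _ := by
          congr 1
          · congr 1; refine Finset.sum_congr rfl fun i _ => Real.sq_sqrt (hbn i)
          · congr 1; refine Finset.sum_congr rfl fun i _ => ?_
            rw [mul_pow, Real.sq_sqrt (hbn i), sq_abs]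
            congr 1
            rw [show (u - ((i : ℕ) : ℝ)/m) = -(((i : ℕ) : ℝ)/m - u) by ring, neg_pow]
            simp
  rw [sum_bernsteinBasis m hu, variance_bernsteinBasis m hm hu, Real.sqrt_one, one_mul] at key
  refine key.trans ?_
  have h1 : u * (1 - u) / m ≤ 1 / (4 * m) := by
    rw [div_le_div_iff₀ hmpos (by positivity)]
    nlinarith [sq_nonneg (u - 1/2)]
  refine (Real.sqrt_le_sqrt h1).trans_eq ?_
  rw [show (4:ℝ) * m = (2 * Real.sqrt m)^2 by
    rw [mul_pow, Real.sq_sqrt hmpos.le]; norm_num]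
  rw [one_div, one_div, Real.sqrt_inv, Real.sqrt_sq (by positivity)]

lemma sum_prod_swap {d m : ℕ} (g : Fin d → Fin (m + 1) → ℝ) :
    ∑ k : Fin d → Fin (m + 1), ∏ ℓ, g ℓ (k ℓ) = ∏ ℓ, ∑ i, g ℓ i := by
  rw [Finset.prod_univ_sum]
  simp [Fintype.piFinset_univ]

/-- if `C : [0,1]^d → ℝ` is ℓ¹-Lipschitz and `f : [0,1]^d → ℝ` is bounded,
then `sup_{u ∈ [0,1]^d} |B_m f(u) − C(u)| ≤ sup_{v ∈ [0,1]^d} |f(v) − C(v)| + d/(2√m)`. -/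
theorem bernstein_approx_le_sup_add_bias (d m : ℕ) (hd : 1 ≤ d) (hm : 1 ≤ m)
    (C f : (Fin d → ℝ) → ℝ)
    (hLip : ∀ u v : Fin d → ℝ, (∀ ℓ, u ℓ ∈ Set.Icc (0 : ℝ) 1) →
      (∀ ℓ, v ℓ ∈ Set.Icc (0 : ℝ) 1) → |C u - C v| ≤ ∑ ℓ, |u ℓ - v ℓ|)
    (hf : ∃ M : ℝ, ∀ v : Fin d → ℝ, (∀ ℓ, v ℓ ∈ Set.Icc (0 : ℝ) 1) → |f v| ≤ M) :
    ∀ u : Fin d → ℝ, (∀ ℓ, u ℓ ∈ Set.Icc (0 : ℝ) 1) →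
      |bernsteinB d m f u - C u| ≤
        sSup {x : ℝ | ∃ v : Fin d → ℝ, (∀ ℓ, v ℓ ∈ Set.Icc (0 : ℝ) 1) ∧ x = |f v - C v|}
          + (d : ℝ) / (2 * Real.sqrt m) := by
  intro u hu
  set S := sSup {x : ℝ | ∃ v : Fin d → ℝ, (∀ ℓ, v ℓ ∈ Set.Icc (0 : ℝ) 1) ∧ x = |f v - C v|}
    with hS
  have hmpos : (0:ℝ) < m := by exact_mod_cast hm
  obtain ⟨M, hM⟩ := hf
  have hbdd : BddAbove {x : ℝ | ∃ v : Fin d → ℝ,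
      (∀ ℓ, v ℓ ∈ Set.Icc (0 : ℝ) 1) ∧ x = |f v - C v|} := by
    refine ⟨M + (|C (fun _ => 0)| + d), ?_⟩
    rintro x ⟨v, hv, rfl⟩
    have hCv : |C v| ≤ |C (fun _ => 0)| + d := by
      have h1 := hLip v (fun _ => 0) hv (fun _ => by simp)
      have h2 : ∑ ℓ, |v ℓ - 0| ≤ (d : ℝ) := by
        calc ∑ ℓ, |v ℓ - 0| ≤ ∑ _ℓ : Fin d, (1:ℝ) := by
              refine Finset.sum_le_sum fun ℓ _ => ?_
              rw [sub_zero, abs_of_nonneg (hv ℓ).1]; exact (hv ℓ).2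
          _ = d := by simp
      have h3 := abs_sub_abs_le_abs_sub (C v) (C (fun _ => 0))
      linarith [h1.trans h2]
    calc |f v - C v| ≤ |f v| + |C v| := abs_sub _ _
      _ ≤ M + (|C (fun _ => 0)| + d) := add_le_add (hM v hv) hCv
  have hSle : ∀ v : Fin d → ℝ, (∀ ℓ, v ℓ ∈ Set.Icc (0 : ℝ) 1) → |f v - C v| ≤ S :=
    fun v hv => le_csSup hbdd ⟨v, hv, rfl⟩
  have hp : ∀ k : Fin d → Fin (m + 1), ∀ ℓ, ((k ℓ : ℕ) : ℝ) / m ∈ Set.Icc (0:ℝ) 1 := by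
    intro k ℓ
    constructor
    · positivity
    · rw [div_le_one hmpos]
      exact_mod_cast Nat.lt_succ_iff.mp (k ℓ).isLt
  have hPr : ∀ k : Fin d → Fin (m + 1), 0 ≤ ∏ ℓ, bernsteinBasis m (k ℓ) (u ℓ) :=
    fun k => Finset.prod_nonneg fun ℓ _ => bernsteinBasis_nonneg m (k ℓ) (hu ℓ)
  have hsum1 : ∑ k : Fin d → Fin (m + 1), ∏ ℓ, bernsteinBasis m (k ℓ) (u ℓ) = 1 :=
    calc ∑ k : Fin d → Fin (m + 1), ∏ ℓ, bernsteinBasis m (k ℓ) (u ℓ)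
        = ∏ ℓ, ∑ i : Fin (m + 1), bernsteinBasis m i (u ℓ) :=
          sum_prod_swap (fun ℓ i => bernsteinBasis m i (u ℓ))
      _ = 1 := Finset.prod_eq_one fun ℓ _ => sum_bernsteinBasis m (hu ℓ)
  -- factorized bound for each coordinate
  have hfac : ∀ ℓ : Fin d,
      ∑ k : Fin d → Fin (m + 1),
        |((k ℓ : ℕ) : ℝ) / m - u ℓ| * ∏ j, bernsteinBasis m (k j) (u j)
      ≤ 1 / (2 * Real.sqrt m) := by
    intro ℓ
    set g : Fin d → Fin (m + 1) → ℝ := fun j i =>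
      (if j = ℓ then |((i : ℕ) : ℝ) / m - u j| else 1) * bernsteinBasis m i (u j) with hg
    have hterm : ∀ k : Fin d → Fin (m + 1),
        |((k ℓ : ℕ) : ℝ) / m - u ℓ| * ∏ j, bernsteinBasis m (k j) (u j)
          = ∏ j, g j (k j) := by
      intro k
      simp only [hg, Finset.prod_mul_distrib]
      congr 1
      rw [Finset.prod_ite_eq' Finset.univ ℓ (fun j => |((k j : ℕ) : ℝ) / m - u j|)]
      simp
    have hrest : ∀ j : Fin d, j ≠ ℓ → ∑ i, g j i = 1 := by
      intro j hj
      simp only [hg, if_neg hj, one_mul]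
      exact sum_bernsteinBasis m (hu j)
    calc ∑ k : Fin d → Fin (m + 1),
          |((k ℓ : ℕ) : ℝ) / m - u ℓ| * ∏ j, bernsteinBasis m (k j) (u j)
        = ∑ k : Fin d → Fin (m + 1), ∏ j, g j (k j) :=
          Finset.sum_congr rfl fun k _ => hterm k
      _ = ∏ j, ∑ i, g j i := sum_prod_swap g
      _ = ∑ i, g ℓ i := Finset.prod_eq_single ℓ (fun j _ hj => hrest j hj)
          (fun h => absurd (Finset.mem_univ ℓ) h)
      _ ≤ 1 / (2 * Real.sqrt m) := by
          simp only [hg, if_pos rfl]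
          exact key1d m hm (hu ℓ)
  -- main computation
  have hdiff : bernsteinB d m f u - C u =
      ∑ k : Fin d → Fin (m + 1),
        (f (fun ℓ => ((k ℓ : ℕ) : ℝ) / m) - C u) * ∏ ℓ, bernsteinBasis m (k ℓ) (u ℓ) := by
    have : ∑ k : Fin d → Fin (m + 1),
        (f (fun ℓ => ((k ℓ : ℕ) : ℝ) / m) - C u) * ∏ ℓ, bernsteinBasis m (k ℓ) (u ℓ)
        = (∑ k : Fin d → Fin (m + 1),
            f (fun ℓ => ((k ℓ : ℕ) : ℝ) / m) * ∏ ℓ, bernsteinBasis m (k ℓ) (u ℓ))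
          - C u * ∑ k : Fin d → Fin (m + 1), ∏ ℓ, bernsteinBasis m (k ℓ) (u ℓ) := by
      rw [Finset.mul_sum, ← Finset.sum_sub_distrib]
      exact Finset.sum_congr rfl fun k _ => by ring
    rw [this, hsum1, mul_one, bernsteinB]
  calc |bernsteinB d m f u - C u|
      ≤ ∑ k : Fin d → Fin (m + 1),
          |f (fun ℓ => ((k ℓ : ℕ) : ℝ) / m) - C u| * ∏ ℓ, bernsteinBasis m (k ℓ) (u ℓ) := by
        rw [hdiff]
        refine (Finset.abs_sum_le_sum_abs _ _).trans (le_of_eq ?_)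
        exact Finset.sum_congr rfl fun k _ => by rw [abs_mul, abs_of_nonneg (hPr k)]
    _ ≤ ∑ k : Fin d → Fin (m + 1),
          (S + ∑ ℓ, |((k ℓ : ℕ) : ℝ) / m - u ℓ|) * ∏ ℓ, bernsteinBasis m (k ℓ) (u ℓ) := by
        refine Finset.sum_le_sum fun k _ => mul_le_mul_of_nonneg_right ?_ (hPr k)
        have h1 : |f (fun ℓ => ((k ℓ : ℕ) : ℝ) / m) - C u|
            ≤ |f (fun ℓ => ((k ℓ : ℕ) : ℝ) / m) - C (fun ℓ => ((k ℓ : ℕ) : ℝ) / m)|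
              + |C (fun ℓ => ((k ℓ : ℕ) : ℝ) / m) - C u| := by
          have := abs_sub_le (f (fun ℓ => ((k ℓ : ℕ) : ℝ) / m))
            (C (fun ℓ => ((k ℓ : ℕ) : ℝ) / m)) (C u)
          exact this
        refine h1.trans (add_le_add (hSle _ (hp k)) ?_)
        exact hLip _ u (hp k) hu
    _ = S * (∑ k : Fin d → Fin (m + 1), ∏ ℓ, bernsteinBasis m (k ℓ) (u ℓ))
        + ∑ k : Fin d → Fin (m + 1),
            (∑ ℓ, |((k ℓ : ℕ) : ℝ) / m - u ℓ|) * ∏ ℓ, bernsteinBasis m (k ℓ) (u ℓ) := by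
        rw [Finset.mul_sum, ← Finset.sum_add_distrib]
        exact Finset.sum_congr rfl fun k _ => by ring
    _ = S + ∑ ℓ, ∑ k : Fin d → Fin (m + 1),
            |((k ℓ : ℕ) : ℝ) / m - u ℓ| * ∏ j, bernsteinBasis m (k j) (u j) := by
        rw [hsum1, mul_one]
        congr 1
        rw [Finset.sum_comm]
        exact Finset.sum_congr rfl fun k _ => Finset.sum_mul _ _ _
    _ ≤ S + ∑ _ℓ : Fin d, 1 / (2 * Real.sqrt m) := by
        exact add_le_add le_rfl (Finset.sum_le_sum fun ℓ _ => hfac ℓ)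
    _ = S + (d : ℝ) / (2 * Real.sqrt m) := by
        rw [Finset.sum_const, Finset.card_univ, Fintype.card_fin, nsmul_eq_mul]
        ring
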